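/- Conditional mutual information decomposes under a classical flag appended to the conditioning system: let ρ and σ be density matrices (Hermitian, positive semidefinite, trace 1) indexed by K×L×M, let λ ∈ [0,1], and define τ, indexed by K×L×(M×Fin 2), by τ := λ·(ρ ⊗ |0⟩⟨0|) + (1−λ)·(σ ⊗ |1⟩⟨1|), where the Fin 2 factor is appended to the M system. Then I(K;L|M,Fin 2)_τ = λ·I(K;L|M)_ρ + (1−λ)·I(K;L|M)_σ. -/

import Mathlib

open scoped BigOperators
open Matrix Kronecker
open scoped ComplexOrder

noncomputable section

/-- `φ(t) = -t·log₂ t`. -/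
noncomputable def entPhi (t : ℝ) : ℝ := -(t * Real.logb 2 t)

/-- von Neumann entropy (in bits) of a Hermitian matrix, via its eigenvalues. -/
noncomputable def vnEntropy {n : Type*} [Fintype n] [DecidableEq n] (ρ : Matrix n n ℂ) : ℝ :=
  if h : ρ.IsHermitian then ∑ i, entPhi (h.eigenvalues i) else 0

/-- Partial trace over the second factor. -/
def ptrace2 {I J : Type*} [Fintype J] (ρ : Matrix (I × J) (I × J) ℂ) : Matrix I I ℂ :=
  Matrix.of fun i i' => ∑ j, ρ (i, j) (i', j)

/-- Partial trace over the first factor. -/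
def ptrace1 {I J : Type*} [Fintype I] (ρ : Matrix (I × J) (I × J) ℂ) : Matrix J J ℂ :=
  Matrix.of fun j j' => ∑ i, ρ (i, j) (i, j')

/-- Marginal on `K × M` of a state on `K × L × M`. -/
def margKM {K L M : Type*} [Fintype L] (σ : Matrix (K × L × M) (K × L × M) ℂ) :
    Matrix (K × M) (K × M) ℂ :=
  Matrix.of fun p q => ∑ l, σ (p.1, l, p.2) (q.1, l, q.2)

/-- Marginal on `L × M` of a state on `K × L × M`. -/
def margLM {K L M : Type*} [Fintype K] (σ : Matrix (K × L × M) (K × L × M) ℂ) :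
    Matrix (L × M) (L × M) ℂ :=
  Matrix.of fun p q => ∑ k, σ (k, p.1, p.2) (k, q.1, q.2)

/-- Marginal on `M` of a state on `K × L × M`. -/
def margM {K L M : Type*} [Fintype K] [Fintype L] (σ : Matrix (K × L × M) (K × L × M) ℂ) :
    Matrix M M ℂ :=
  Matrix.of fun m m' => ∑ k, ∑ l, σ (k, l, m) (k, l, m')

/-- Conditional mutual information `I(K;L|M)` of a state on `K × L × M`. -/
noncomputable def CMI {K L M : Type*} [Fintype K] [Fintype L] [Fintype M]
    [DecidableEq K] [DecidableEq L] [DecidableEq M]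
    (σ : Matrix (K × L × M) (K × L × M) ℂ) : ℝ :=
  vnEntropy (margKM σ) + vnEntropy (margLM σ) - vnEntropy σ - vnEntropy (margM σ)

def IsProbDist {X : Type*} [Fintype X] (p : X → ℝ) : Prop :=
  (∀ x, 0 ≤ p x) ∧ ∑ x, p x = 1

/-- An assemblage: PSD members, normalized for each input, and no-signaling. -/
def IsAssemblage {A X B : Type*} [Fintype A] [Fintype B]
    (ρ : A → X → Matrix B B ℂ) : Prop :=
  (∀ a x, (ρ a x).PosSemidef) ∧
  (∀ x, ∑ a, (ρ a x).trace = 1) ∧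
  (∀ x x' : X, ∑ a, ρ a x = ∑ a, ρ a x')


open Polynomial in
lemma my_charmatrix_diagonal {n : Type*} [Fintype n] [DecidableEq n] (d : n → ℂ) :
    charmatrix (diagonal d) = diagonal (fun i => (X : ℂ[X]) - C (d i)) := by
  ext i j
  by_cases h : i = j
  · subst h; simp [charmatrix_apply_eq]
  · simp [charmatrix_apply_ne _ _ _ h, diagonal_apply_ne _ h]

open Polynomial in
lemma my_charpoly_diagonal {n : Type*} [Fintype n] [DecidableEq n] (d : n → ℂ) :
    (diagonal d).charpoly = ∏ i, (X - C (d i)) := by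
  rw [Matrix.charpoly, my_charmatrix_diagonal, det_diagonal]

open Polynomial in
lemma my_charpoly_conj {n : Type*} [Fintype n] [DecidableEq n] (U A : Matrix n n ℂ)
    (h1 : U * star U = 1) (h2 : star U * U = 1) :
    (U * A * star U).charpoly = A.charpoly := by
  have key : charmatrix (U * A * star U)
      = (U.map C) * charmatrix A * ((star U).map C) := by
    unfold charmatrix
    simp only [RingHom.mapMatrix_apply]
    rw [mul_sub, sub_mul, ← Matrix.map_mul, ← Matrix.map_mul]
    congr 1
    rw [mul_assoc, (Matrix.scalar_commute (X : ℂ[X]) (fun r => Commute.all _ _) _).eq,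
      ← mul_assoc, ← Matrix.map_mul, h1, Matrix.map_one _ (map_zero C) (map_one C), one_mul]
  rw [Matrix.charpoly, Matrix.charpoly, key, det_mul, det_mul, mul_comm, ← mul_assoc,
    ← det_mul, ← Matrix.map_mul, h2, Matrix.map_one _ (map_zero C) (map_one C), det_one, one_mul]

open Polynomial in
lemma my_charpoly_hermitian {n : Type*} [Fintype n] [DecidableEq n]
    {A : Matrix n n ℂ} (hA : A.IsHermitian) :
    A.charpoly = ∏ i, (X - C ((hA.eigenvalues i : ℂ))) := by
  conv_lhs => rw [hA.spectral_theorem, Unitary.conjStarAlgAut_apply]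
  rw [my_charpoly_conj _ _ (Matrix.mem_unitaryGroup_iff.mp (hA.eigenvectorUnitary).2)
    (Matrix.mem_unitaryGroup_iff'.mp (hA.eigenvectorUnitary).2), my_charpoly_diagonal]
  rfl

open Polynomial in
lemma sum_f_eig {n : Type*} [Fintype n] [DecidableEq n]
    {A : Matrix n n ℂ} (hA : A.IsHermitian) (f : ℝ → ℝ) :
    ∑ i, f (hA.eigenvalues i) = (A.charpoly.roots.map (fun z => f z.re)).sum := by
  have h : A.charpoly
      = ((Finset.univ.val.map (fun i => (hA.eigenvalues i : ℂ))).map (fun a => X - C a)).prod := by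
    rw [my_charpoly_hermitian hA, Multiset.map_map, Finset.prod_eq_multiset_prod]
    rfl
  rw [h, Polynomial.roots_multiset_prod_X_sub_C, Multiset.map_map, Finset.sum_eq_multiset_sum]
  simp

open Polynomial in
lemma vnEntropy_eq_roots {n : Type*} [Fintype n] [DecidableEq n]
    {A : Matrix n n ℂ} (hA : A.IsHermitian) :
    vnEntropy A = (A.charpoly.roots.map (fun z => entPhi z.re)).sum := by
  rw [vnEntropy, dif_pos hA, sum_f_eig hA]

open Polynomial in
lemma sum_roots_prod {n : Type*} [Fintype n] (g : n → ℝ) (f : ℝ → ℝ) :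
    (((∏ i, (X - C ((g i : ℂ))))).roots.map (fun z : ℂ => f z.re)).sum = ∑ i, f (g i) := by
  have h : (∏ i, (X - C ((g i : ℂ))))
      = ((Finset.univ.val.map (fun i => ((g i : ℂ)))).map (fun a => X - C a)).prod := by
    rw [Multiset.map_map, Finset.prod_eq_multiset_prod]; rfl
  rw [h, Polynomial.roots_multiset_prod_X_sub_C, Multiset.map_map, Finset.sum_eq_multiset_sum]
  simp

lemma vnEntropy_reindex {n m : Type*} [Fintype n] [DecidableEq n] [Fintype m] [DecidableEq m]
    (e : n ≃ m) {A : Matrix n n ℂ} (hA : A.IsHermitian) :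
    vnEntropy (Matrix.reindex e e A) = vnEntropy A := by
  have hA' : (Matrix.reindex e e A).IsHermitian := hA.submatrix e.symm
  rw [vnEntropy_eq_roots hA', vnEntropy_eq_roots hA, Matrix.charpoly_reindex]

lemma vnEntropy_fromBlocks {n m : Type*} [Fintype n] [DecidableEq n] [Fintype m] [DecidableEq m]
    {A : Matrix n n ℂ} {B : Matrix m m ℂ} (hA : A.IsHermitian) (hB : B.IsHermitian) :
    vnEntropy (Matrix.fromBlocks A 0 0 B) = vnEntropy A + vnEntropy B := by
  have hAB : (Matrix.fromBlocks A 0 0 B).IsHermitian := by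
    rw [Matrix.IsHermitian, Matrix.fromBlocks_conjTranspose]
    simp [hA.eq, hB.eq]
  rw [vnEntropy_eq_roots hAB, vnEntropy_eq_roots hA, vnEntropy_eq_roots hB,
    Matrix.charpoly_fromBlocks_zero₂₁,
    Polynomial.roots_mul (mul_ne_zero A.charpoly_monic.ne_zero B.charpoly_monic.ne_zero),
    Multiset.map_add, Multiset.sum_add]

open Polynomial in
lemma vnEntropy_of_diag {n : Type*} [Fintype n] [DecidableEq n]
    {A : Matrix n n ℂ} (hA : A.IsHermitian) (U : Matrix n n ℂ)
    (h1 : U * star U = 1) (h2 : star U * U = 1) (d : n → ℝ)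
    (hd : A = U * Matrix.diagonal (fun i => ((d i : ℂ))) * star U) :
    vnEntropy A = ∑ i, entPhi (d i) := by
  rw [vnEntropy_eq_roots hA, hd, my_charpoly_conj _ _ h1 h2, my_charpoly_diagonal, sum_roots_prod]

lemma entPhi_mul {c x : ℝ} (hc : 0 ≤ c) (hx : 0 ≤ x) :
    entPhi (c * x) = c * entPhi x + x * entPhi c := by
  rcases eq_or_lt_of_le hc with rfl | hc
  · simp [entPhi]
  rcases eq_or_lt_of_le hx with rfl | hx
  · simp [entPhi]
  unfold entPhi
  rw [Real.logb, Real.logb, Real.logb, Real.log_mul hc.ne' hx.ne']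
  ring

lemma trace_re_eq_sum_eig {n : Type*} [Fintype n] [DecidableEq n]
    {A : Matrix n n ℂ} (hA : A.IsHermitian) :
    A.trace = ((∑ i, hA.eigenvalues i : ℝ) : ℂ) := by
  conv_lhs => rw [hA.spectral_theorem, Unitary.conjStarAlgAut_apply]
  rw [Matrix.trace_mul_cycle,
    Matrix.mem_unitaryGroup_iff'.mp (hA.eigenvectorUnitary).2, one_mul, Matrix.trace_diagonal]
  push_cast
  rfl

lemma herm_real_smul {n : Type*} [Fintype n] {A : Matrix n n ℂ} (hA : A.IsHermitian) (c : ℝ) :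
    ((c : ℂ) • A).IsHermitian := by
  rw [Matrix.IsHermitian, Matrix.conjTranspose_smul, hA.eq]
  simp

lemma vnEntropy_real_smul {n : Type*} [Fintype n] [DecidableEq n]
    {A : Matrix n n ℂ} (hA : A.PosSemidef) (c : ℝ) (hc : 0 ≤ c) :
    vnEntropy ((c : ℂ) • A) = c * vnEntropy A + entPhi c * (A.trace).re := by
  have herm := hA.1
  have hsm : ((c : ℂ) • A).IsHermitian := herm_real_smul herm c
  have hd : (c : ℂ) • A = (herm.eigenvectorUnitary : Matrix n n ℂ)
      * Matrix.diagonal (fun i => ((c * herm.eigenvalues i : ℝ) : ℂ))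
      * star (herm.eigenvectorUnitary : Matrix n n ℂ) := by
    conv_lhs => rw [herm.spectral_theorem, Unitary.conjStarAlgAut_apply]
    rw [← smul_mul_assoc, ← mul_smul_comm]
    congr 2
    ext i j
    rcases eq_or_ne i j with rfl | h
    · simp
    · simp [Matrix.diagonal_apply_ne _ h]
  rw [vnEntropy_of_diag hsm _ (Matrix.mem_unitaryGroup_iff.mp (herm.eigenvectorUnitary).2)
    (Matrix.mem_unitaryGroup_iff'.mp (herm.eigenvectorUnitary).2) _ hd]
  have h2 : ∀ i, entPhi (c * herm.eigenvalues i)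
      = c * entPhi (herm.eigenvalues i) + herm.eigenvalues i * entPhi c := fun i =>
    entPhi_mul hc (hA.eigenvalues_nonneg i)
  rw [Finset.sum_congr rfl (fun i _ => h2 i), Finset.sum_add_distrib, ← Finset.mul_sum,
    ← Finset.sum_mul, vnEntropy, dif_pos herm, trace_re_eq_sum_eig herm]
  simp [mul_comm]

lemma posSemidef_sum_embed {ι m N : Type*} [Fintype ι] [Fintype m] [Fintype N] [DecidableEq N]
    {ρ : Matrix N N ℂ} (h : ρ.PosSemidef) (e : ι → m → N) :
    (Matrix.of fun x y : m => ∑ i, ρ (e i x) (e i y)).PosSemidef := by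
  have key : (Matrix.of fun x y : m => ∑ i, ρ (e i x) (e i y))
      = ∑ i, ((Matrix.of fun a x => if a = e i x then (1:ℂ) else 0)ᴴ * ρ
          * (Matrix.of fun a x => if a = e i x then (1:ℂ) else 0)) := by
    ext x y
    rw [Matrix.sum_apply]
    refine Finset.sum_congr rfl fun i _ => ?_
    simp only [Matrix.mul_apply, Matrix.conjTranspose_apply, Matrix.of_apply,
      apply_ite (star : ℂ → ℂ), star_one, star_zero, ite_mul, one_mul, zero_mul,
      mul_ite, mul_one, mul_zero, Finset.sum_ite_eq, Finset.sum_ite_eq',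
      Finset.mem_univ, if_true]
  rw [key]
  exact Finset.sum_induction _ (fun M : Matrix m m ℂ => M.PosSemidef)
    (fun a b ha hb => ha.add hb)
    Matrix.PosSemidef.zero (fun i _ => h.conjTranspose_mul_mul_same _)

def flag2 {n : Type*} (A B : Matrix n n ℂ) : Matrix (n × Fin 2) (n × Fin 2) ℂ :=
  Matrix.of fun p q =>
    if p.2 = 0 ∧ q.2 = 0 then A p.1 q.1 else if p.2 = 1 ∧ q.2 = 1 then B p.1 q.1 else 0

def sumEquivProdFin2 (n : Type*) : (n ⊕ n) ≃ (n × Fin 2) where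
  toFun := Sum.elim (fun x => (x, 0)) (fun x => (x, 1))
  invFun := fun p => if p.2 = 0 then Sum.inl p.1 else Sum.inr p.1
  left_inv := by rintro (x | x) <;> simp
  right_inv := by rintro ⟨x, i⟩; fin_cases i <;> simp

lemma herm_fromBlocks {n m : Type*} {A : Matrix n n ℂ} {B : Matrix m m ℂ}
    (hA : A.IsHermitian) (hB : B.IsHermitian) :
    (Matrix.fromBlocks A 0 0 B).IsHermitian := by
  rw [Matrix.IsHermitian, Matrix.fromBlocks_conjTranspose]
  simp [hA.eq, hB.eq]

lemma flag2_eq_reindex {n : Type*} {A B : Matrix n n ℂ} :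
    flag2 A B = Matrix.reindex (sumEquivProdFin2 n) (sumEquivProdFin2 n)
      (Matrix.fromBlocks A 0 0 B) := by
  ext ⟨x, i⟩ ⟨y, j⟩
  fin_cases i <;> fin_cases j <;>
    simp [flag2, sumEquivProdFin2, Matrix.reindex_apply, Matrix.submatrix_apply,
      Equiv.coe_fn_symm_mk]

lemma herm_flag2 {n : Type*} {A B : Matrix n n ℂ}
    (hA : A.IsHermitian) (hB : B.IsHermitian) : (flag2 A B).IsHermitian := by
  rw [flag2_eq_reindex]
  exact (herm_fromBlocks hA hB).submatrix _

lemma vnEntropy_flag2 {n : Type*} [Fintype n] [DecidableEq n]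
    {A B : Matrix n n ℂ} (hA : A.IsHermitian) (hB : B.IsHermitian) :
    vnEntropy (flag2 A B) = vnEntropy A + vnEntropy B := by
  rw [flag2_eq_reindex, vnEntropy_reindex _ (herm_fromBlocks hA hB),
    vnEntropy_fromBlocks hA hB]

lemma trace_margKM {K L M : Type*} [Fintype K] [Fintype L] [Fintype M]
    (ρ : Matrix (K × L × M) (K × L × M) ℂ) : (margKM ρ).trace = ρ.trace := by
  simp only [Matrix.trace, Matrix.diag, margKM, Matrix.of_apply, Fintype.sum_prod_type]
  exact Finset.sum_congr rfl fun k _ => Finset.sum_comm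

lemma trace_margLM {K L M : Type*} [Fintype K] [Fintype L] [Fintype M]
    (ρ : Matrix (K × L × M) (K × L × M) ℂ) : (margLM ρ).trace = ρ.trace := by
  simp only [Matrix.trace, Matrix.diag, margLM, Matrix.of_apply, Fintype.sum_prod_type]
  exact (Finset.sum_congr rfl fun l _ => Finset.sum_comm).trans Finset.sum_comm

lemma trace_margM {K L M : Type*} [Fintype K] [Fintype L] [Fintype M]
    (ρ : Matrix (K × L × M) (K × L × M) ℂ) : (margM ρ).trace = ρ.trace := by
  simp only [Matrix.trace, Matrix.diag, margM, Matrix.of_apply, Fintype.sum_prod_type]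
  exact Finset.sum_comm.trans (Finset.sum_congr rfl fun k _ => Finset.sum_comm)

def eAssoc (K L M : Type*) : (K × L × (M × Fin 2)) ≃ ((K × L × M) × Fin 2) :=
  ⟨fun q => ((q.1, q.2.1, q.2.2.1), q.2.2.2), fun p => (p.1.1, p.1.2.1, p.1.2.2, p.2),
    fun _ => rfl, fun _ => rfl⟩

def ePair (K M : Type*) : (K × (M × Fin 2)) ≃ ((K × M) × Fin 2) :=
  ⟨fun p => ((p.1, p.2.1), p.2.2), fun p => (p.1.1, p.1.2, p.2), fun _ => rfl, fun _ => rfl⟩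

lemma vnEntropy_flag2_smul {n : Type*} [Fintype n] [DecidableEq n]
    {lam : ℝ} (h0 : 0 ≤ lam) (h1' : 0 ≤ 1 - lam) (A B : Matrix n n ℂ)
    (hA : A.PosSemidef) (hB : B.PosSemidef) (hAt : A.trace = 1) (hBt : B.trace = 1) :
    vnEntropy (flag2 (((lam : ℝ) : ℂ) • A) (((1 - lam : ℝ) : ℂ) • B))
      = lam * vnEntropy A + (1 - lam) * vnEntropy B + entPhi lam + entPhi (1 - lam) := by
  rw [vnEntropy_flag2 (herm_real_smul hA.1 lam) (herm_real_smul hB.1 (1 - lam)),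
    vnEntropy_real_smul hA lam h0, vnEntropy_real_smul hB (1 - lam) h1', hAt, hBt]
  simp
  ring


/-- CMI decomposes under a classical flag appended to the conditioning system. -/
theorem cmi_classical_flag_decomposition {K L M : Type*}
    [Fintype K] [Fintype L] [Fintype M]
    [DecidableEq K] [DecidableEq L] [DecidableEq M]
    (ρ σ : Matrix (K × L × M) (K × L × M) ℂ)
    (hρ : ρ.PosSemidef) (hρt : ρ.trace = 1)
    (hσ : σ.PosSemidef) (hσt : σ.trace = 1)
    (lam : ℝ) (h0 : 0 ≤ lam) (h1 : lam ≤ 1)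
    (τ : Matrix (K × L × M × Fin 2) (K × L × M × Fin 2) ℂ)
    (hτ : τ = Matrix.of fun q q' =>
      ((lam : ℝ) : ℂ) * ρ (q.1, q.2.1, q.2.2.1) (q'.1, q'.2.1, q'.2.2.1) *
        (if q.2.2.2 = 0 ∧ q'.2.2.2 = 0 then 1 else 0)
      + ((1 - lam : ℝ) : ℂ) * σ (q.1, q.2.1, q.2.2.1) (q'.1, q'.2.1, q'.2.2.1) *
        (if q.2.2.2 = 1 ∧ q'.2.2.2 = 1 then 1 else 0)) :
    CMI τ = lam * CMI ρ + (1 - lam) * CMI σ := by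
  subst hτ
  have hρh := hρ.1
  have hσh := hσ.1
  have h1' : (0:ℝ) ≤ 1 - lam := by linarith
  -- PSD of marginals
  have hρKM : (margKM ρ).PosSemidef :=
    posSemidef_sum_embed hρ (fun (l : L) (p : K × M) => (p.1, l, p.2))
  have hσKM : (margKM σ).PosSemidef :=
    posSemidef_sum_embed hσ (fun (l : L) (p : K × M) => (p.1, l, p.2))
  have hρLM : (margLM ρ).PosSemidef :=
    posSemidef_sum_embed hρ (fun (k : K) (p : L × M) => (k, p.1, p.2))
  have hσLM : (margLM σ).PosSemidef :=
    posSemidef_sum_embed hσ (fun (k : K) (p : L × M) => (k, p.1, p.2))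
  have hMrw : ∀ (X : Matrix (K × L × M) (K × L × M) ℂ), margM X
      = Matrix.of fun m m' => ∑ i : K × L, X (i.1, i.2, m) (i.1, i.2, m') := by
    intro X
    ext m m'
    simp [margM, Fintype.sum_prod_type]
  have hρM : (margM ρ).PosSemidef := by
    rw [hMrw]
    exact posSemidef_sum_embed hρ (fun (i : K × L) (m : M) => (i.1, i.2, m))
  have hσM : (margM σ).PosSemidef := by
    rw [hMrw]
    exact posSemidef_sum_embed hσ (fun (i : K × L) (m : M) => (i.1, i.2, m))
  set τ : Matrix (K × L × M × Fin 2) (K × L × M × Fin 2) ℂ := Matrix.of fun q q' =>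
      ((lam : ℝ) : ℂ) * ρ (q.1, q.2.1, q.2.2.1) (q'.1, q'.2.1, q'.2.2.1) *
        (if q.2.2.2 = 0 ∧ q'.2.2.2 = 0 then 1 else 0)
      + ((1 - lam : ℝ) : ℂ) * σ (q.1, q.2.1, q.2.2.1) (q'.1, q'.2.1, q'.2.2.1) *
        (if q.2.2.2 = 1 ∧ q'.2.2.2 = 1 then 1 else 0) with hτdef
  -- identifications
  have idτ : τ = Matrix.reindex (eAssoc K L M).symm (eAssoc K L M).symm
      (flag2 (((lam : ℝ) : ℂ) • ρ) (((1 - lam : ℝ) : ℂ) • σ)) := by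
    ext ⟨k, l, m, i⟩ ⟨k', l', m', j⟩
    fin_cases i <;> fin_cases j <;>
      simp [hτdef, flag2, eAssoc, Matrix.reindex_apply, Matrix.submatrix_apply]
  have idKM : margKM τ = Matrix.reindex (ePair K M).symm (ePair K M).symm
      (flag2 (((lam : ℝ) : ℂ) • margKM ρ) (((1 - lam : ℝ) : ℂ) • margKM σ)) := by
    ext ⟨k, m, i⟩ ⟨k', m', j⟩
    fin_cases i <;> fin_cases j <;>
      simp [hτdef, margKM, flag2, ePair, Matrix.reindex_apply, Matrix.submatrix_apply,
        Finset.sum_add_distrib, Finset.mul_sum]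
  have idLM : margLM τ = Matrix.reindex (ePair L M).symm (ePair L M).symm
      (flag2 (((lam : ℝ) : ℂ) • margLM ρ) (((1 - lam : ℝ) : ℂ) • margLM σ)) := by
    ext ⟨l, m, i⟩ ⟨l', m', j⟩
    fin_cases i <;> fin_cases j <;>
      simp [hτdef, margLM, flag2, ePair, Matrix.reindex_apply, Matrix.submatrix_apply,
        Finset.sum_add_distrib, Finset.mul_sum]
  have idM : margM τ = flag2 (((lam : ℝ) : ℂ) • margM ρ) (((1 - lam : ℝ) : ℂ) • margM σ) := by
    ext ⟨m, i⟩ ⟨m', j⟩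
    fin_cases i <;> fin_cases j <;>
      simp [hτdef, margM, flag2, Finset.sum_add_distrib, Finset.mul_sum]
  have hEτ : vnEntropy τ = lam * vnEntropy ρ + (1 - lam) * vnEntropy σ
      + entPhi lam + entPhi (1 - lam) := by
    rw [idτ, vnEntropy_reindex _ (herm_flag2 (herm_real_smul hρh lam)
      (herm_real_smul hσh (1 - lam))), vnEntropy_flag2_smul h0 h1' ρ σ hρ hσ hρt hσt]
  have hEKM : vnEntropy (margKM τ) = lam * vnEntropy (margKM ρ)
      + (1 - lam) * vnEntropy (margKM σ) + entPhi lam + entPhi (1 - lam) := by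
    rw [idKM, vnEntropy_reindex _ (herm_flag2 (herm_real_smul hρKM.1 lam)
      (herm_real_smul hσKM.1 (1 - lam))),
      vnEntropy_flag2_smul h0 h1' _ _ hρKM hσKM (by rw [trace_margKM, hρt]) (by rw [trace_margKM, hσt])]
  have hELM : vnEntropy (margLM τ) = lam * vnEntropy (margLM ρ)
      + (1 - lam) * vnEntropy (margLM σ) + entPhi lam + entPhi (1 - lam) := by
    rw [idLM, vnEntropy_reindex _ (herm_flag2 (herm_real_smul hρLM.1 lam)
      (herm_real_smul hσLM.1 (1 - lam))),
      vnEntropy_flag2_smul h0 h1' _ _ hρLM hσLM (by rw [trace_margLM, hρt]) (by rw [trace_margLM, hσt])]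
  have hEM : vnEntropy (margM τ) = lam * vnEntropy (margM ρ)
      + (1 - lam) * vnEntropy (margM σ) + entPhi lam + entPhi (1 - lam) := by
    rw [idM, vnEntropy_flag2_smul h0 h1' _ _ hρM hσM (by rw [trace_margM, hρt]) (by rw [trace_margM, hσt])]
  unfold CMI
  rw [hEτ, hEKM, hELM, hEM]
  ring
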